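/- Let Δ be a finite thin pure simplicial complex of rank n. Every zigzag in Δ is uniquely determined by its k-shadow, for any k ∈ {0, 1, ..., n-1}. Specifically, if {X_i} is the k-shadow of a zigzag of length l, then for k > 0 the (k-1)-shadow is the sequence X_{l-1} ∩ X_0, X_0 ∩ X_1, X_1 ∩ X_2, ..., and for k < n-1 the (k+1)-shadow is the sequence X_0 ∪ X_1, X_1 ∪ X_2, .... -/

import Mathlib

open scoped Classical

variable {V : Type*}

/-- `C` is a facet (maximal face) of a pure rank-`n` complex: a face with `n` vertices. -/
def IsFacet (n : ℕ) (faces : Finset V → Prop) (C : Finset V) : Prop :=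
  faces C ∧ C.card = n

/-- `faces` describes a thin pure simplicial complex of rank `n` over the vertex set `V`:
it is downward closed, every singleton is a face, every face has at most `n` vertices and is
contained in a facet, and every ridge (face with `n - 1` vertices) lies in exactly two facets. -/
def IsThinComplex (n : ℕ) (faces : Finset V → Prop) : Prop :=
  (∀ v : V, faces {v}) ∧
  (∀ ⦃X Y : Finset V⦄, faces X → Y ⊆ X → faces Y) ∧
  (∀ ⦃X : Finset V⦄, faces X → X.card ≤ n) ∧
  (∀ ⦃X : Finset V⦄, faces X → ∃ C : Finset V, IsFacet n faces C ∧ X ⊆ C) ∧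
  (∀ ⦃R : Finset V⦄, faces R → R.card = n - 1 →
    {C : Finset V | IsFacet n faces C ∧ R ⊆ C}.ncard = 2)

/-- A flag, encoded by the ordered vertex sequence `x_0, …, x_{n-1}` determining it:
the chain of faces is `{x_0} ⊂ {x_0,x_1} ⊂ … ⊂ {x_0,…,x_{n-1}}`, the top being a facet. -/
def IsFlag (n : ℕ) (faces : Finset V → Prop) (F : List V) : Prop :=
  F.length = n ∧ F.Nodup ∧ faces F.toFinset

/-- `G = T(F)` for the zigzag operator `T = σ_{n-1} ∘ ⋯ ∘ σ_0`: if `F` is determined by the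
vertex sequence `x_0, x_1, …, x_{n-1}`, then `T(F)` is determined by `x_1, …, x_{n-1}, y` with
`y ≠ x_0`. -/
def TStep (n : ℕ) (faces : Finset V → Prop) (F G : List V) : Prop :=
  IsFlag n faces F ∧ IsFlag n faces G ∧
    ∃ y : V, G = F.tail ++ [y] ∧ F.head? ≠ some y

/-- A zigzag of length `l`: the orbit `F, T F, T² F, …` of the operator `T` on flags, recorded
as the sequence `i ↦ Tⁱ F`; it is `l`-periodic with `l` the minimal period. -/
def IsZigzag (n : ℕ) (faces : Finset V → Prop) (l : ℕ) (F : ℕ → List V) : Prop :=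
  0 < l ∧ (∀ i : ℕ, TStep n faces (F i) (F (i + 1))) ∧ (∀ i : ℕ, F (i + l) = F i) ∧
    ∀ m : ℕ, 0 < m → (∀ i : ℕ, F (i + m) = F i) → l ≤ m

/-- The set of flags of a zigzag together with those of its reverse zigzag; two zigzags are
identified (a zigzag is identified with its reverse, and with its cyclic shifts) exactly when
these sets coincide. -/
def ZigzagClass (F : ℕ → List V) : Set (List V) :=
  Set.range F ∪ Set.range fun i => (F i).reverse

/-- `G = σ_i(F)`: the flag `G` has the same `j`-faces as `F` for all `j ≠ i`, and a different
`i`-face (the `j`-face of the flag with vertex sequence `F` is `(F.take (j+1)).toFinset`). -/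
def SigmaStep (n : ℕ) (faces : Finset V → Prop) (i : ℕ) (F G : List V) : Prop :=
  IsFlag n faces F ∧ IsFlag n faces G ∧
    (∀ j : ℕ, j < n → j ≠ i → (G.take (j + 1)).toFinset = (F.take (j + 1)).toFinset) ∧
    (G.take (i + 1)).toFinset ≠ (F.take (i + 1)).toFinset

/-- `G = T_δ(F)` where `T_δ = σ_{δ(n-1)} ∘ ⋯ ∘ σ_{δ(0)}`. -/
def TDeltaStep (n : ℕ) (faces : Finset V → Prop) (δ : Equiv.Perm (Fin n))
    (F G : List V) : Prop :=
  ∃ c : ℕ → List V, c 0 = F ∧ c n = G ∧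
    ∀ i : Fin n, SigmaStep n faces (δ i) (c i) (c (i + 1))

/-- A generalized zigzag (δ-zigzag) of length `l`: the orbit of `T_δ` on flags. -/
def IsGenZigzag (n : ℕ) (faces : Finset V → Prop) (δ : Equiv.Perm (Fin n)) (l : ℕ)
    (F : ℕ → List V) : Prop :=
  0 < l ∧ (∀ i : ℕ, TDeltaStep n faces δ (F i) (F (i + 1))) ∧ (∀ i : ℕ, F (i + l) = F i) ∧
    ∀ m : ℕ, 0 < m → (∀ i : ℕ, F (i + m) = F i) → l ≤ m

/-- Adjacency in the facet-adjacency graph `Γ_{n-1}(Δ)`: two distinct facets meeting in a ridge. -/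
def FacetAdj (n : ℕ) (faces : Finset V → Prop) (C D : Finset V) : Prop :=
  IsFacet n faces C ∧ IsFacet n faces D ∧ C ≠ D ∧ (C ∩ D).card = n - 1

/-- `p 0, p 1, …, p m` is a path in the facet-adjacency graph. -/
def IsFacetPath (n : ℕ) (faces : Finset V → Prop) (m : ℕ) (p : ℕ → Finset V) : Prop :=
  ∀ i : ℕ, i < m → FacetAdj n faces (p i) (p (i + 1))

/-- The path distance in the facet-adjacency graph `Γ_{n-1}(Δ)`. -/
noncomputable def facetDist (n : ℕ) (faces : Finset V → Prop) (X Y : Finset V) : ℕ :=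
  sInf {m : ℕ | ∃ p : ℕ → Finset V, p 0 = X ∧ p m = Y ∧ IsFacetPath n faces m p}

/-- The complex is a chamber complex: the facet-adjacency graph is connected. -/
def ChamberConnected (n : ℕ) (faces : Finset V → Prop) : Prop :=
  ∀ C D : Finset V, IsFacet n faces C → IsFacet n faces D →
    ∃ (m : ℕ) (p : ℕ → Finset V), p 0 = C ∧ p m = D ∧ IsFacetPath n faces m p


section Aux

lemma take_mono_mem {t : List V} {k : ℕ} {z : V} (h : z ∈ t.take k) :
    z ∈ t.take (k + 1) := by
  have : t.take k = (t.take (k + 1)).take k := by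
    rw [List.take_take]; congr 1; omega
  rw [this] at h
  exact List.take_subset _ _ h

lemma tstep_struct {n : ℕ} {faces : Finset V → Prop} {L M : List V} (hn : 0 < n)
    (h : TStep n faces L M) :
    ∃ (a : V) (t : List V) (y : V), L = a :: t ∧ M = t ++ [y] ∧ t.length = n - 1 ∧
      (a :: t).Nodup ∧ y ≠ a ∧ y ∉ t := by
  obtain ⟨⟨hlen, hnd, -⟩, ⟨-, hndM, -⟩, y, hM, hy⟩ := h
  obtain ⟨a, t, rfl⟩ : ∃ a t, L = a :: t := by
    cases L with
    | nil => simp at hlen; omega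
    | cons a t => exact ⟨a, t, rfl⟩
  simp only [List.tail_cons] at hM
  refine ⟨a, t, y, rfl, hM, by simp at hlen; omega, hnd, ?_, ?_⟩
  · intro hya; exact hy (by simp [hya])
  · intro hyt
    have := hndM
    rw [hM] at this
    exact ((List.nodup_append'.mp this).2.2 hyt) (by simp)

lemma tstep_part1 {n : ℕ} {faces : Finset V → Prop} {L M : List V} (h : TStep n faces L M)
    {k : ℕ} (hk0 : 0 < k) (hk : k < n) :
    (M.take k).toFinset = (L.take (k + 1)).toFinset ∩ (M.take (k + 1)).toFinset := by
  obtain ⟨a, t, y, rfl, rfl, hlen, hnd, hya, hyt⟩ := tstep_struct (by omega : 0 < n) h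
  have ha : a ∉ t := (List.nodup_cons.mp hnd).1
  have hkt : k ≤ t.length := by omega
  have hMk : ((t ++ [y]).take k) = t.take k := List.take_append_of_le_length hkt
  rw [hMk]
  ext z
  simp only [Finset.mem_inter, List.mem_toFinset, List.take_succ_cons, List.mem_cons]
  constructor
  · intro hz
    refine ⟨Or.inr hz, ?_⟩
    have : z ∈ (t ++ [y]).take k := by rw [hMk]; exact hz
    exact take_mono_mem this
  · rintro ⟨hz1 | hz1, hz2⟩
    · subst hz1
      exfalso
      have : z ∈ t ++ [y] := List.take_subset _ _ hz2
      rcases List.mem_append.mp this with h' | h'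
      · exact ha h'
      · simp at h'; exact hya h'.symm
    · exact hz1

lemma tstep_part2 {n : ℕ} {faces : Finset V → Prop} {L M : List V} (h : TStep n faces L M)
    {k : ℕ} (hk : k + 1 < n) :
    (L.take (k + 2)).toFinset = (L.take (k + 1)).toFinset ∪ (M.take (k + 1)).toFinset := by
  obtain ⟨a, t, y, rfl, rfl, hlen, hnd, hya, hyt⟩ := tstep_struct (by omega) h
  have hkt : k + 1 ≤ t.length := by omega
  rw [List.take_append_of_le_length hkt]
  ext z
  simp only [Finset.mem_union, List.mem_toFinset, List.take_succ_cons, List.mem_cons]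
  constructor
  · rintro (rfl | hz)
    · exact Or.inl (Or.inl rfl)
    · exact Or.inr hz
  · rintro ((rfl | hz) | hz)
    · exact Or.inl rfl
    · exact Or.inr (take_mono_mem hz)
    · exact Or.inr hz

lemma list_eq_of_prefix_finsets [DecidableEq V] {L M : List V} (hL : L.Nodup)
    (hlen : L.length = M.length)
    (h : ∀ j < L.length, (L.take (j + 1)).toFinset = (M.take (j + 1)).toFinset) : L = M := by
  have key : ∀ j ≤ L.length, (L.take j).toFinset = (M.take j).toFinset := by
    intro j hj
    cases j with
    | zero => simp
    | succ j => exact h j (by omega)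
  apply List.ext_getElem hlen
  intro j h1 h2
  have e1 : L.take (j + 1) = L.take j ++ [L[j]] := by
    rw [List.take_succ, List.getElem?_eq_getElem h1]; rfl
  have e2 : M.take (j + 1) = M.take j ++ [M[j]] := by
    rw [List.take_succ, List.getElem?_eq_getElem h2]; rfl
  have notmemL : L[j] ∉ L.take j := by
    have hnd : (L.take (j + 1)).Nodup := hL.sublist (List.take_sublist _ _)
    rw [e1] at hnd
    intro hmem
    exact (List.nodup_append'.mp hnd).2.2 hmem (by simp)
  have hmemL : L[j] ∈ (M.take (j + 1)).toFinset := by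
    rw [← h j h1, List.mem_toFinset, e1]
    exact List.mem_append.mpr (Or.inr (by simp))
  rw [List.mem_toFinset, e2, List.mem_append] at hmemL
  rcases hmemL with hmem | hmem
  · exfalso
    apply notmemL
    have : L[j] ∈ (M.take j).toFinset := List.mem_toFinset.mpr hmem
    rw [← key j (by omega), List.mem_toFinset] at this
    exact this
  · simpa using hmem

end Aux

/-- A zigzag is uniquely determined by any of its `k`-shadows; moreover if `{X_i}`
is the `k`-shadow then (for `k > 0`) the `(k-1)`-face of `F_{i+1}` is `X_i ∩ X_{i+1}` and (for
`k < n - 1`) the `(k+1)`-face of `F_i` is `X_i ∪ X_{i+1}`. -/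
theorem stmt4 [Fintype V] (n : ℕ) (faces : Finset V → Prop) (hΔ : IsThinComplex n faces)
    (l : ℕ) (F : ℕ → List V) (h : IsZigzag n faces l F) (k : ℕ) (hk : k < n) :
    (0 < k → ∀ i : ℕ, ((F (i + 1)).take k).toFinset =
        ((F i).take (k + 1)).toFinset ∩ ((F (i + 1)).take (k + 1)).toFinset) ∧
    (k + 1 < n → ∀ i : ℕ, ((F i).take (k + 2)).toFinset =
        ((F i).take (k + 1)).toFinset ∪ ((F (i + 1)).take (k + 1)).toFinset) ∧
    (∀ F' : ℕ → List V, IsZigzag n faces l F' →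
      (∀ i : ℕ, ((F' i).take (k + 1)).toFinset = ((F i).take (k + 1)).toFinset) →
      ∀ i : ℕ, F' i = F i) := by
  classical
  obtain ⟨hl, hstep, hper, -⟩ := h
  refine ⟨fun hk0 i => tstep_part1 (hstep i) hk0 hk,
    fun hk1 i => tstep_part2 (hstep i) hk1, ?_⟩
  intro F' h' hsh
  obtain ⟨-, hstep', hper', -⟩ := h'
  set S : ℕ → Prop := fun j => ∀ i : ℕ,
      ((F' i).take (j + 1)).toFinset = ((F i).take (j + 1)).toFinset with hS
  have down : ∀ j : ℕ, j + 1 < n → S (j + 1) → S j := by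
    intro j hjn hSj i
    have hil : i + l - 1 + 1 = i + l := by omega
    calc ((F' i).take (j + 1)).toFinset
        = ((F' (i + l)).take (j + 1)).toFinset := by rw [hper']
      _ = ((F' (i + l - 1)).take (j + 2)).toFinset ∩
            ((F' (i + l)).take (j + 2)).toFinset := by
          rw [← hil]; exact tstep_part1 (hstep' (i + l - 1)) (by omega) hjn
      _ = ((F (i + l - 1)).take (j + 2)).toFinset ∩
            ((F (i + l)).take (j + 2)).toFinset := by
          rw [hSj (i + l - 1), hSj (i + l)]
      _ = ((F i).take (j + 1)).toFinset := by
          rw [← hil]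
          exact (tstep_part1 (hstep (i + l - 1)) (by omega) hjn).symm.trans
            (by rw [hil, hper])
  have up : ∀ j : ℕ, j + 1 < n → S j → S (j + 1) := by
    intro j hjn hSj i
    calc ((F' i).take (j + 2)).toFinset
        = ((F' i).take (j + 1)).toFinset ∪ ((F' (i + 1)).take (j + 1)).toFinset :=
          tstep_part2 (hstep' i) hjn
      _ = ((F i).take (j + 1)).toFinset ∪ ((F (i + 1)).take (j + 1)).toFinset := by
          rw [hSj i, hSj (i + 1)]
      _ = ((F i).take (j + 2)).toFinset := (tstep_part2 (hstep i) hjn).symm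
  have hdown : ∀ d : ℕ, S (k - d) := by
    intro d
    induction d with
    | zero => simpa using hsh
    | succ d ih =>
      rcases Nat.eq_zero_or_pos (k - d) with h0 | h0
      · have : k - (d + 1) = k - d := by omega
        rw [this]; exact ih
      · have hkd : k - (d + 1) + 1 = k - d := by omega
        exact down (k - (d + 1)) (by omega) (by rw [hkd]; exact ih)
  have hup : ∀ d : ℕ, k + d < n → S (k + d) := by
    intro d
    induction d with
    | zero => intro _; simpa using hsh
    | succ d ih =>
      intro hd
      have : k + (d + 1) = (k + d) + 1 := by omega
      rw [this]
      exact up (k + d) (by omega) (ih (by omega))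
  have hall : ∀ j : ℕ, j < n → S j := by
    intro j hj
    rcases le_or_gt j k with hle | hlt
    · have := hdown (k - j)
      rwa [Nat.sub_sub_self hle] at this
    · have := hup (j - k) (by omega)
      rwa [Nat.add_sub_cancel' hlt.le] at this
  intro i
  obtain ⟨hlen', hnd', -⟩ := (hstep' i).1
  obtain ⟨hlen, hnd, -⟩ := (hstep i).1
  exact list_eq_of_prefix_finsets hnd' (hlen'.trans hlen.symm)
    (fun j hj => hall j (by omega) i)
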